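/- Let p be a prime and let A, B ∈ F_p[[X]] (or over any commutative ring of characteristic p). Define, for a series C = Σ γₙXⁿ, the section C_{0,1} = Σ_{n≥0} γ_{pn} Xⁿ. Then (A ⧢ B)_{0,1} = A_{0,1} ⧢ B_{0,1}, where ⧢ is the shuffle product. -/

import Mathlib

open PowerSeries

/-- The shuffle product of formal power series. -/
noncomputable def shuffle {K : Type*} [CommRing K] (A B : PowerSeries K) : PowerSeries K :=
  PowerSeries.mk fun n => ∑ k ∈ Finset.range (n + 1),
    (n.choose k : K) * (coeff k A) * (coeff (n - k) B)

/-- The section `C_{0,1} = Σ_{n≥0} γ_{pn} Xⁿ` of `C = Σ γₙXⁿ`. -/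
noncomputable def sect {K : Type*} [CommRing K] (p : ℕ) (C : PowerSeries K) : PowerSeries K :=
  PowerSeries.mk fun n => coeff (p * n) C

lemma lucas_cast {K : Type*} [CommRing K] (p : ℕ) [hp : Fact p.Prime] [CharP K p]
    (n k : ℕ) : ((p * n).choose k : K) = if p ∣ k then (n.choose (k / p) : K) else 0 := by
  have h := @Choose.choose_modEq_choose_mod_mul_choose_div_nat (p * n) k p hp
  have hp0 : 0 < p := hp.out.pos
  rw [Nat.mul_mod_right, Nat.mul_div_cancel_left _ hp0] at h
  have := CharP.natCast_eq_natCast' K p h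
  rw [this]
  by_cases hd : p ∣ k
  · rw [Nat.mod_eq_zero_of_dvd hd]
    simp [hd]
  · have : k % p ≠ 0 := fun h0 => hd (Nat.dvd_of_mod_eq_zero h0)
    rw [if_neg hd, Nat.choose_eq_zero_of_lt (Nat.pos_of_ne_zero this)]
    simp

/-- Over a commutative ring of prime characteristic `p`,
`(A ⧢ B)_{0,1} = A_{0,1} ⧢ B_{0,1}`. -/
theorem sect_shuffle {K : Type*} [CommRing K] (p : ℕ) [hp : Fact p.Prime] [CharP K p]
    (A B : PowerSeries K) :
    sect p (shuffle A B) = shuffle (sect p A) (sect p B) := by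
  have hp0 : 0 < p := hp.out.pos
  ext n
  simp only [sect, shuffle, coeff_mk]
  have hinj : ∀ a ∈ Finset.range (n + 1), ∀ b ∈ Finset.range (n + 1),
      p * a = p * b → a = b := fun a _ b _ h => Nat.eq_of_mul_eq_mul_left hp0 h
  calc ∑ k ∈ Finset.range (p * n + 1),
        ((p * n).choose k : K) * (coeff k A) * (coeff (p * n - k) B)
      = ∑ k ∈ (Finset.range (n + 1)).image (fun j => p * j),
        ((p * n).choose k : K) * (coeff k A) * (coeff (p * n - k) B) := by
        refine (Finset.sum_subset ?_ ?_).symm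
        · intro k hk
          simp only [Finset.mem_image, Finset.mem_range] at hk ⊢
          obtain ⟨j, hj, rfl⟩ := hk
          have := Nat.mul_le_mul_left p (Nat.lt_succ_iff.mp hj)
          omega
        · intro k hk hk'
          simp only [Finset.mem_image, Finset.mem_range] at hk hk'
          have hnd : ¬ p ∣ k := by
            rintro ⟨j, rfl⟩
            exact hk' ⟨j, ⟨by nlinarith, rfl⟩⟩
          rw [lucas_cast, if_neg hnd, zero_mul, zero_mul]
    _ = ∑ j ∈ Finset.range (n + 1),
        ((p * n).choose (p * j) : K) * (coeff (p * j) A) * (coeff (p * n - p * j) B) :=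
        Finset.sum_image hinj
    _ = ∑ j ∈ Finset.range (n + 1),
        (n.choose j : K) * (coeff (p * j) A) * (coeff (p * (n - j)) B) := by
        refine Finset.sum_congr rfl fun j hj => ?_
        rw [lucas_cast, if_pos ⟨j, rfl⟩, Nat.mul_div_cancel_left _ hp0, ← Nat.mul_sub]
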